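/- arXiv:2504.16424 — 8 statements merged into one kernel-verified Lean document; each statement's English description precedes it below -/
import Mathlib

section
/- Let N be a positive integer and let H be the N×N complex tridiagonal matrix with diagonal entries a_1,…,a_N, superdiagonal entries b_1,…,b_{N-1} and subdiagonal entries c_2,…,c_N. Fix E ∈ ℂ and suppose f_1,…,f_{N+1} ∈ ℂ satisfy f_{N+1} = 0 and, for every k = 1,…,N, f_k · (a_k − E − b_k f_{k+1} c_{k+1}) = 1 (where b_N and c_{N+1} may be taken as 0). Then H − E·I = U · F · L, where F is the diagonal matrix with diagonal entries 1/f_1,…,1/f_N, U is the upper bidiagonal matrix with 1's on the diagonal and superdiagonal entries b_k f_{k+1} (k = 1,…,N−1), and L is the lower bidiagonal matrix with 1's on the diagonal and subdiagonal entries f_k c_k (k = 2,…,N). -/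
private lemma sum_one' {N : ℕ} (g : Fin N → ℂ) (p : ℕ) :
    ∑ k : Fin N, (if (k : ℕ) = p then g k else 0) =
      if hp : p < N then g ⟨p, hp⟩ else 0 := by
  split
  · next hp =>
    rw [Finset.sum_eq_single (⟨p, hp⟩ : Fin N)]
    · simp
    · intro k _ hk
      rw [if_neg (fun h => hk (Fin.ext h))]
    · simp
  · next hp =>
    apply Finset.sum_eq_zero
    intro k _
    rw [if_neg]
    omega

private lemma sum_two' {N : ℕ} (g : Fin N → ℂ) (p q : ℕ) (hpq : p ≠ q)
    (h0 : ∀ k : Fin N, (k : ℕ) ≠ p → (k : ℕ) ≠ q → g k = 0) :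
    ∑ k : Fin N, g k =
      (if hp : p < N then g ⟨p, hp⟩ else 0) + (if hq : q < N then g ⟨q, hq⟩ else 0) := by
  have key : ∀ k : Fin N, g k =
      (if (k : ℕ) = p then g k else 0) + (if (k : ℕ) = q then g k else 0) := by
    intro k
    by_cases h1 : (k : ℕ) = p
    · rw [if_pos h1, if_neg (by first | omega | (simp only [Fin.val_mk]; omega))]; ring
    · by_cases h2 : (k : ℕ) = q
      · rw [if_neg h1, if_pos h2]; ring
      · rw [if_neg h1, if_neg h2, h0 k h1 h2]; ring
  rw [Finset.sum_congr rfl (fun k _ => key k), Finset.sum_add_distrib,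
    sum_one' g p, sum_one' g q]

/-- Continued-fraction factorization `H - E·I = U · F · L` of a complex
tridiagonal matrix. Indices are 1-based: the diagonal of `H` is `a 1, …, a N`,
the superdiagonal is `b 1, …, b (N-1)`, the subdiagonal is `c 2, …, c N`;
`b N = 0` and `c (N+1) = 0` by convention. -/
theorem stmt0 (N : ℕ) (hN : 0 < N) (a b c : ℕ → ℂ) (E : ℂ) (f : ℕ → ℂ)
    (hbN : b N = 0) (hcN : c (N + 1) = 0)
    (hfN : f (N + 1) = 0)
    (hrec : ∀ k, 1 ≤ k → k ≤ N → f k * (a k - E - b k * f (k + 1) * c (k + 1)) = 1)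
    (H U F L : Matrix (Fin N) (Fin N) ℂ)
    (hH : ∀ i j : Fin N, H i j =
      if (i : ℕ) = (j : ℕ) then a ((i : ℕ) + 1)
      else if (i : ℕ) + 1 = (j : ℕ) then b ((i : ℕ) + 1)
      else if (j : ℕ) + 1 = (i : ℕ) then c ((i : ℕ) + 1) else 0)
    (hU : ∀ i j : Fin N, U i j =
      if (i : ℕ) = (j : ℕ) then 1
      else if (i : ℕ) + 1 = (j : ℕ) then b ((i : ℕ) + 1) * f ((i : ℕ) + 2) else 0)
    (hF : ∀ i j : Fin N, F i j =
      if (i : ℕ) = (j : ℕ) then 1 / f ((i : ℕ) + 1) else 0)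
    (hL : ∀ i j : Fin N, L i j =
      if (i : ℕ) = (j : ℕ) then 1
      else if (j : ℕ) + 1 = (i : ℕ) then f ((i : ℕ) + 1) * c ((i : ℕ) + 1) else 0) :
    H - E • (1 : Matrix (Fin N) (Fin N) ℂ) = U * F * L := by
  have hfne : ∀ k, 1 ≤ k → k ≤ N → f k ≠ 0 := by
    intro k h1 h2 h0
    have := hrec k h1 h2
    rw [h0, zero_mul] at this
    exact zero_ne_one this
  have hinv : ∀ k, 1 ≤ k → k ≤ N →
      1 / f k = a k - E - b k * f (k + 1) * c (k + 1) := by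
    intro k h1 h2
    field_simp [hfne k h1 h2]
    linear_combination -hrec k h1 h2
  -- (U*F) entries
  have hUF : ∀ i l : Fin N, (U * F) i l = U i l * (1 / f ((l : ℕ) + 1)) := by
    intro i l
    rw [Matrix.mul_apply, Finset.sum_eq_single l]
    · rw [hF, if_pos rfl]
    · intro k _ hk
      rw [hF, if_neg (fun h => hk (Fin.ext h)), mul_zero]
    · simp
  ext i j
  rw [Matrix.sub_apply, Matrix.smul_apply, Matrix.one_apply, hH, Matrix.mul_apply]
  rw [sum_two' (fun l => (U * F) i l * L l j) (i : ℕ) ((i : ℕ) + 1) (by first | omega | (simp only [Fin.val_mk]; omega))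
    (by
      intro l h1 h2
      show (U * F) i l * L l j = 0
      rw [hUF, hU, if_neg (by first | omega | (simp only [Fin.val_mk]; omega)), if_neg (by first | omega | (simp only [Fin.val_mk]; omega)), zero_mul, zero_mul])]
  rw [dif_pos i.isLt]
  have hUFii : (U * F) i (⟨(i : ℕ), i.isLt⟩ : Fin N) = 1 / f ((i : ℕ) + 1) := by
    rw [hUF, hU]
    simp
  by_cases hij : (i : ℕ) = (j : ℕ)
  · -- diagonal
    rw [if_pos hij, if_pos (Fin.ext hij)]
    have hLij : L ⟨(i : ℕ), i.isLt⟩ j = 1 := by rw [hL]; simp [hij]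
    rw [hUFii, hLij, mul_one]
    by_cases hlast : (i : ℕ) + 1 < N
    · rw [dif_pos hlast]
      have h1 : (U * F) i ⟨(i : ℕ) + 1, hlast⟩ = b ((i : ℕ) + 1) * f ((i : ℕ) + 2) * (1 / f ((i : ℕ) + 2)) := by
        rw [hUF, hU]
        simp
      have h2 : L ⟨(i : ℕ) + 1, hlast⟩ j = f ((i : ℕ) + 2) * c ((i : ℕ) + 2) := by
        rw [hL]
        rw [if_neg (by first | omega | (simp only [Fin.val_mk]; omega)), if_pos (by first | omega | (simp only [Fin.val_mk]; omega))]
      rw [h1, h2, hinv ((i : ℕ) + 1) (by first | omega | (simp only [Fin.val_mk]; omega)) (by first | omega | (simp only [Fin.val_mk]; omega))]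
      have hf2 : f ((i : ℕ) + 2) ≠ 0 := hfne _ (by first | omega | (simp only [Fin.val_mk]; omega)) (by first | omega | (simp only [Fin.val_mk]; omega))
      field_simp
      ring
    · -- i is the last index: i+1 = N
      have hiN : (i : ℕ) + 1 = N := by omega
      rw [dif_neg hlast, add_zero, hinv ((i : ℕ) + 1) (by first | omega | (simp only [Fin.val_mk]; omega)) (by first | omega | (simp only [Fin.val_mk]; omega)), hiN, hbN, smul_eq_mul, mul_one]
      ring
  · rw [if_neg hij, if_neg (fun h => hij (Fin.val_eq_of_eq h))]
    by_cases hsup : (i : ℕ) + 1 = (j : ℕ)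
    · -- superdiagonal
      rw [if_pos hsup]
      have hLij : L ⟨(i : ℕ), i.isLt⟩ j = 0 := by
        rw [hL, if_neg (by first | omega | (simp only [Fin.val_mk]; omega)), if_neg (by first | omega | (simp only [Fin.val_mk]; omega))]
      have hlast : (i : ℕ) + 1 < N := by omega
      rw [hLij, mul_zero, dif_pos hlast]
      have h1 : (U * F) i ⟨(i : ℕ) + 1, hlast⟩ = b ((i : ℕ) + 1) * f ((i : ℕ) + 2) * (1 / f ((i : ℕ) + 2)) := by
        rw [hUF, hU]
        simp
      have h2 : L ⟨(i : ℕ) + 1, hlast⟩ j = 1 := by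
        rw [hL, if_pos (by first | omega | (simp only [Fin.val_mk]; omega))]
      have hf2 : f ((i : ℕ) + 2) ≠ 0 := hfne _ (by first | omega | (simp only [Fin.val_mk]; omega)) (by first | omega | (simp only [Fin.val_mk]; omega))
      rw [h1, h2]
      field_simp
      simp
    · rw [if_neg hsup]
      have hzero2 : (if hq : (i : ℕ) + 1 < N then
          (U * F) i ⟨(i : ℕ) + 1, hq⟩ * L ⟨(i : ℕ) + 1, hq⟩ j else 0) = 0 := by
        split
        · next hq =>
          have : L ⟨(i : ℕ) + 1, hq⟩ j = 0 := by
            rw [hL, if_neg (by first | omega | (simp only [Fin.val_mk]; omega)), if_neg (by first | omega | (simp only [Fin.val_mk]; omega))]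
          rw [this, mul_zero]
        · rfl
      rw [hzero2, add_zero, hUFii]
      by_cases hsub : (j : ℕ) + 1 = (i : ℕ)
      · -- subdiagonal
        rw [if_pos hsub]
        have hLij : L ⟨(i : ℕ), i.isLt⟩ j = f ((i : ℕ) + 1) * c ((i : ℕ) + 1) := by
          rw [hL, if_neg (by first | omega | (simp only [Fin.val_mk]; omega)), if_pos (by first | omega | (simp only [Fin.val_mk]; omega))]
        rw [hLij]
        have hf1 : f ((i : ℕ) + 1) ≠ 0 := hfne _ (by first | omega | (simp only [Fin.val_mk]; omega)) (by first | omega | (simp only [Fin.val_mk]; omega))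
        field_simp
        simp
      · rw [if_neg hsub]
        have hLij : L ⟨(i : ℕ), i.isLt⟩ j = 0 := by
          rw [hL, if_neg (by first | omega | (simp only [Fin.val_mk]; omega)), if_neg (by first | omega | (simp only [Fin.val_mk]; omega))]
        rw [hLij, mul_zero, smul_zero, sub_zero]
end

section
/- Let N be a positive integer and let H be the N×N complex tridiagonal matrix with diagonal entries a_k, superdiagonal entries b_k and subdiagonal entries c_{k+1}. Fix E ∈ ℂ and suppose f_1,…,f_{N+1} ∈ ℂ satisfy f_{N+1} = 0 and f_k · (a_k − E − b_k f_{k+1} c_{k+1}) = 1 for every k = 1,…,N. Then H − E·I is invertible and (H − E·I)^{−1} = L^{−1} · F^{−1} · U^{−1}, where F is diagonal with entries 1/f_k, U is unit upper bidiagonal with superdiagonal entries b_k f_{k+1}, and L is unit lower bidiagonal with subdiagonal entries f_k c_k. -/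
private lemma sum_two {N : ℕ} (j : Fin N) (g h : Fin N → ℂ) :
    (∑ m : Fin N, if m = j then g m else if (j : ℕ) + 1 = (m : ℕ) then h m else 0)
      = g j + (if hh : (j : ℕ) + 1 < N then h ⟨(j : ℕ) + 1, hh⟩ else 0) := by
  by_cases hh : (j : ℕ) + 1 < N
  · rw [dif_pos hh]
    set j' : Fin N := ⟨(j : ℕ) + 1, hh⟩ with hj'
    have hne : j' ≠ j := by simp [Fin.ext_iff, hj']
    have key : ∀ m : Fin N,
        (if m = j then g m else if (j : ℕ) + 1 = (m : ℕ) then h m else 0)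
          = (if m = j then g m else 0) + (if m = j' then h m else 0) := by
      intro m
      by_cases h1 : m = j
      · subst h1; simp [hne.symm]
      · by_cases h2 : m = j'
        · subst h2; simp [h1, hj', Fin.ext_iff]
        · have : ¬ ((j : ℕ) + 1 = (m : ℕ)) := by
            intro hc; exact h2 (Fin.ext hc.symm)
          simp [h1, h2, this]
    rw [Finset.sum_congr rfl (fun m _ => key m), Finset.sum_add_distrib,
      Finset.sum_ite_eq' Finset.univ j g, Finset.sum_ite_eq' Finset.univ j' h]
    simp
  · rw [dif_neg hh, add_zero]
    have h0 : ∀ m ∈ Finset.univ, m ≠ j →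
        (if m = j then g m else if (j : ℕ) + 1 = (m : ℕ) then h m else 0) = 0 := by
      intro m _ hm
      have h2 : ¬ ((j : ℕ) + 1 = (m : ℕ)) := by
        intro hc; exact hh (hc ▸ m.isLt)
      simp [hm, h2]
    rw [Finset.sum_eq_single_of_mem j (Finset.mem_univ j) h0]
    simp

/-- Continued-fraction factorization of the resolvent:
`(H - E·I)⁻¹ = L⁻¹ · F⁻¹ · U⁻¹` for a complex tridiagonal matrix `H`
(1-based indexing of the entry data). -/
theorem stmt3 (N : ℕ) (hN : 0 < N) (a b c : ℕ → ℂ) (E : ℂ) (f : ℕ → ℂ)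
    (hbN : b N = 0) (hcN : c (N + 1) = 0)
    (hfN : f (N + 1) = 0)
    (hrec : ∀ k, 1 ≤ k → k ≤ N → f k * (a k - E - b k * f (k + 1) * c (k + 1)) = 1)
    (H U F L : Matrix (Fin N) (Fin N) ℂ)
    (hH : ∀ i j : Fin N, H i j =
      if (i : ℕ) = (j : ℕ) then a ((i : ℕ) + 1)
      else if (i : ℕ) + 1 = (j : ℕ) then b ((i : ℕ) + 1)
      else if (j : ℕ) + 1 = (i : ℕ) then c ((i : ℕ) + 1) else 0)
    (hU : ∀ i j : Fin N, U i j =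
      if (i : ℕ) = (j : ℕ) then 1
      else if (i : ℕ) + 1 = (j : ℕ) then b ((i : ℕ) + 1) * f ((i : ℕ) + 2) else 0)
    (hF : ∀ i j : Fin N, F i j =
      if (i : ℕ) = (j : ℕ) then 1 / f ((i : ℕ) + 1) else 0)
    (hL : ∀ i j : Fin N, L i j =
      if (i : ℕ) = (j : ℕ) then 1
      else if (j : ℕ) + 1 = (i : ℕ) then f ((i : ℕ) + 1) * c ((i : ℕ) + 1) else 0) :
    IsUnit (H - E • (1 : Matrix (Fin N) (Fin N) ℂ)) ∧
      (H - E • (1 : Matrix (Fin N) (Fin N) ℂ))⁻¹ = L⁻¹ * F⁻¹ * U⁻¹ := by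
  classical
  -- nonvanishing of f
  have hf : ∀ k, 1 ≤ k → k ≤ N → f k ≠ 0 := by
    intro k h1 h2 hz
    have := hrec k h1 h2
    rw [hz, zero_mul] at this
    exact zero_ne_one this
  have hinv : ∀ k, 1 ≤ k → k ≤ N → 1 / f k = a k - E - b k * f (k + 1) * c (k + 1) := by
    intro k h1 h2
    rw [eq_comm, eq_div_iff (hf k h1 h2), mul_comm]
    exact hrec k h1 h2
  -- F as diagonal
  have hFdiag : F = Matrix.diagonal (fun i : Fin N => 1 / f ((i : ℕ) + 1)) := by
    ext i j
    rw [hF, Matrix.diagonal_apply]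
    by_cases h : i = j
    · subst h; simp
    · rw [if_neg h, if_neg (fun hc => h (Fin.ext hc))]
  -- (U*F) entries
  have hUF : ∀ i j : Fin N, (U * F) i j = U i j * (1 / f ((j : ℕ) + 1)) := by
    intro i j
    rw [hFdiag, Matrix.mul_diagonal]
  -- the factorization
  have hM : H - E • (1 : Matrix (Fin N) (Fin N) ℂ) = U * F * L := by
    ext i j
    have hsum : (U * F * L) i j
        = (U * F) i j * 1
          + (if hh : (j : ℕ) + 1 < N then
              (U * F) i ⟨(j : ℕ) + 1, hh⟩ *
                (f (((j : ℕ) + 1) + 1) * c (((j : ℕ) + 1) + 1)) else 0) := by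
      rw [Matrix.mul_apply]
      have := sum_two j (fun m => (U * F) i m * 1)
        (fun m => (U * F) i m * (f ((m : ℕ) + 1) * c ((m : ℕ) + 1)))
      rw [← this]
      apply Finset.sum_congr rfl
      intro m _
      rw [hL]
      by_cases h1 : m = j
      · subst h1; simp
      · have h1' : ¬ ((m : ℕ) = (j : ℕ)) := fun hc => h1 (Fin.ext hc)
        rw [if_neg h1', if_neg h1]
        by_cases h2 : (j : ℕ) + 1 = (m : ℕ)
        · rw [if_pos h2, if_pos h2]
        · rw [if_neg h2, if_neg h2, mul_zero]
    rw [hsum, hUF, mul_one]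
    simp only [Matrix.sub_apply, Matrix.smul_apply, Matrix.one_apply, smul_eq_mul, hH, hU]
    by_cases hij : (i : ℕ) = (j : ℕ)
    · -- diagonal
      have hij' : i = j := Fin.ext hij
      rw [if_pos hij, if_pos hij, if_pos hij']
      by_cases hh : (j : ℕ) + 1 < N
      · rw [dif_pos hh, hUF]
        have hne : ¬ ((i : ℕ) = (j : ℕ) + 1) := by omega
        have heq : (i : ℕ) + 1 = (j : ℕ) + 1 := by omega
        have hUval : U i ⟨(j : ℕ) + 1, hh⟩ = b ((i : ℕ) + 1) * f ((i : ℕ) + 2) := by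
          rw [hU]; simp only [Fin.val_mk]; rw [if_neg hne, if_pos heq]
        rw [hUval]
        simp only [Fin.val_mk]
        have hfz : f ((j : ℕ) + 1 + 1) ≠ 0 := hf _ (by omega) (by omega)
        have key := hinv ((j : ℕ) + 1) (by omega) (by omega)
        have h22 : (j : ℕ) + 2 = (j : ℕ) + 1 + 1 := by omega
        rw [hij, h22, key]
        field_simp
        ring
      · rw [dif_neg hh, add_zero]
        have hjN : (j : ℕ) + 1 = N := by omega
        have key := hinv ((i : ℕ) + 1) (by omega) (by omega)
        rw [hij, hjN] at key
        rw [hij, hjN, key, hbN]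
        ring
    · rw [if_neg hij, if_neg hij, if_neg (fun hc : i = j => hij (congrArg Fin.val hc))]
      by_cases hsup : (i : ℕ) + 1 = (j : ℕ)
      · -- superdiagonal
        rw [if_pos hsup, if_pos hsup]
        have hfz : f ((j : ℕ) + 1) ≠ 0 := hf _ (by omega) (by omega)
        have hext : (if hh : (j : ℕ) + 1 < N then
              (U * F) i ⟨(j : ℕ) + 1, hh⟩ *
                (f (((j : ℕ) + 1) + 1) * c (((j : ℕ) + 1) + 1)) else 0) = 0 := by
          by_cases hh : (j : ℕ) + 1 < N
          · rw [dif_pos hh, hUF, hU]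
            have h1 : ¬ ((i : ℕ) = (j : ℕ) + 1) := by omega
            have h2 : ¬ ((i : ℕ) + 1 = (j : ℕ) + 1) := by omega
            rw [if_neg h1, if_neg h2]
            ring
          · rw [dif_neg hh]
        rw [hext, add_zero]
        have : (i : ℕ) + 2 = (j : ℕ) + 1 := by omega
        rw [this]
        field_simp
        ring
      · rw [if_neg hsup, if_neg hsup]
        by_cases hsub : (j : ℕ) + 1 = (i : ℕ)
        · -- subdiagonal
          rw [if_pos hsub]
          have hh : (j : ℕ) + 1 < N := hsub ▸ i.isLt
          rw [dif_pos hh, hUF]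
          have h1 : (i : ℕ) = (j : ℕ) + 1 := hsub.symm
          have hUval : U i ⟨(j : ℕ) + 1, hh⟩ = 1 := by
            rw [hU]; simp only [Fin.val_mk]; rw [if_pos h1]
          rw [hUval]
          simp only [Fin.val_mk]
          have hfz : f ((j : ℕ) + 1 + 1) ≠ 0 := hf _ (by omega) (by omega)
          have hii : (i : ℕ) + 1 = (j : ℕ) + 1 + 1 := by omega
          rw [hii]
          field_simp
          ring
        · -- far entries
          rw [if_neg hsub]
          by_cases hh : (j : ℕ) + 1 < N
          · rw [dif_pos hh, hUF]
            have h1 : ¬ ((i : ℕ) = (j : ℕ) + 1) := fun hc => hsub hc.symm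
            have h2 : ¬ ((i : ℕ) + 1 = (j : ℕ) + 1) := by omega
            have hUval : U i ⟨(j : ℕ) + 1, hh⟩ = 0 := by
              rw [hU]; simp only [Fin.val_mk]; rw [if_neg h1, if_neg h2]
            rw [hUval]
            ring
          · rw [dif_neg hh]
            ring
    -- done with hM
  -- determinants
  have hUdet : U.det = 1 := by
    have hUt : U.BlockTriangular id := by
      intro i j hlt
      have h' : (j : ℕ) < (i : ℕ) := hlt
      rw [hU, if_neg (by omega : ¬ ((i : ℕ) = (j : ℕ))),
        if_neg (by omega : ¬ ((i : ℕ) + 1 = (j : ℕ)))]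
    rw [Matrix.det_of_upperTriangular hUt]
    apply Finset.prod_eq_one
    intro i _
    rw [hU, if_pos rfl]
  have hLdet : L.det = 1 := by
    have hLt : L.BlockTriangular OrderDual.toDual := by
      intro i j hlt
      have h' : (i : ℕ) < (j : ℕ) := hlt
      rw [hL, if_neg (by omega : ¬ ((i : ℕ) = (j : ℕ))),
        if_neg (by omega : ¬ ((j : ℕ) + 1 = (i : ℕ)))]
    rw [Matrix.det_of_lowerTriangular L hLt]
    apply Finset.prod_eq_one
    intro i _
    rw [hL, if_pos rfl]
  have hFdet : F.det ≠ 0 := by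
    rw [hFdiag, Matrix.det_diagonal]
    apply Finset.prod_ne_zero_iff.mpr
    intro i _
    exact one_div_ne_zero (hf _ (by omega) (by omega))
  have hdet : (H - E • (1 : Matrix (Fin N) (Fin N) ℂ)).det ≠ 0 := by
    rw [hM, Matrix.det_mul, Matrix.det_mul, hUdet, hLdet]
    simpa using hFdet
  constructor
  · rw [Matrix.isUnit_iff_isUnit_det]
    exact isUnit_iff_ne_zero.mpr hdet
  · rw [hM, Matrix.mul_inv_rev, Matrix.mul_inv_rev, mul_assoc]
end

section
/- Let N be a positive integer and let H be the N×N complex tridiagonal matrix with diagonal entries a_k, superdiagonal entries b_k and subdiagonal entries c_{k+1}. Fix E ∈ ℂ and suppose f_1,…,f_{N+1} ∈ ℂ satisfy f_{N+1} = 0 and f_k · (a_k − E − b_k f_{k+1} c_{k+1}) = 1 for every k = 1,…,N. Then H − E·I is invertible and the (1,1) entry of its inverse equals f_1, i.e., [(H − E·I)^{−1}]_{11} = f_1 (the Green's-function identity). -/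
open Finset Matrix

private def Xext (N : ℕ) (x : Fin N → ℂ) (m : ℕ) : ℂ :=
  if h : 1 ≤ m ∧ m ≤ N then x ⟨m - 1, by omega⟩ else 0

private lemma Xext_fin (N : ℕ) (x : Fin N → ℂ) (j : Fin N) :
    Xext N x (j.val + 1) = x j := by
  have h : 1 ≤ j.val + 1 ∧ j.val + 1 ≤ N := ⟨by omega, by omega⟩
  rw [Xext, dif_pos h]
  congr 1

private lemma Xext_zero (N : ℕ) (x : Fin N → ℂ) : Xext N x 0 = 0 := by
  rw [Xext, dif_neg]; omega

private lemma Xext_top (N : ℕ) (x : Fin N → ℂ) : Xext N x (N + 1) = 0 := by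
  rw [Xext, dif_neg]; omega

private lemma sum_shift (n t : ℕ) (g : ℕ → ℂ) :
    ∑ m ∈ Finset.range n, (if m + 1 = t then g m else 0)
      = if 1 ≤ t ∧ t ≤ n then g (t - 1) else 0 := by
  rcases t with _ | s
  · simp
  · have h : ∀ m ∈ Finset.range n, (if m + 1 = s + 1 then g m else 0)
        = (if s = m then g m else 0) := by
      intro m _
      by_cases h : m = s
      · subst h; rw [if_pos rfl, if_pos rfl]
      · rw [if_neg (by omega), if_neg (by omega)]
    rw [Finset.sum_congr rfl h, Finset.sum_ite_eq]
    by_cases hs : s ∈ Finset.range n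
    · rw [if_pos hs, if_pos (by simp at hs; omega)]
      simp
    · rw [if_neg hs, if_neg (by simp at hs; omega)]

private lemma key_row (N : ℕ) (a b c : ℕ → ℂ) (E : ℂ) (hbN : b N = 0)
    (H : Matrix (Fin N) (Fin N) ℂ)
    (hH : ∀ i j : Fin N, H i j =
      if (i : ℕ) = (j : ℕ) then a ((i : ℕ) + 1)
      else if (i : ℕ) + 1 = (j : ℕ) then b ((i : ℕ) + 1)
      else if (j : ℕ) + 1 = (i : ℕ) then c ((i : ℕ) + 1) else 0)
    (x : Fin N → ℂ) (i : Fin N) :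
    (H - E • (1 : Matrix (Fin N) (Fin N) ℂ)).mulVec x i
      = c (i.val + 1) * Xext N x i.val
        + (a (i.val + 1) - E) * Xext N x (i.val + 1)
        + b (i.val + 1) * Xext N x (i.val + 2) := by
  have hsum : (H - E • (1 : Matrix (Fin N) (Fin N) ℂ)).mulVec x i
      = ∑ j : Fin N, (H - E • (1 : Matrix (Fin N) (Fin N) ℂ)) i j * x j := by
    simp [Matrix.mulVec, dotProduct]
  have hterm : ∀ j : Fin N, (H - E • (1 : Matrix (Fin N) (Fin N) ℂ)) i j * x j
      = (if (i : ℕ) = (j : ℕ) then (a (i.val + 1) - E) * Xext N x ((j : ℕ) + 1) else 0)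
        + (if (i : ℕ) + 1 = (j : ℕ) then b (i.val + 1) * Xext N x ((j : ℕ) + 1) else 0)
        + (if (j : ℕ) + 1 = (i : ℕ) then c (i.val + 1) * Xext N x ((j : ℕ) + 1) else 0) := by
    intro j
    rw [Xext_fin]
    have h2 : (H - E • (1 : Matrix (Fin N) (Fin N) ℂ)) i j
        = H i j - E * (if (i : ℕ) = (j : ℕ) then 1 else 0) := by
      simp [Matrix.sub_apply, Matrix.one_apply, Fin.ext_iff]
    rw [h2, hH i j]
    split_ifs <;> first | (exfalso; omega) | ring
  rw [hsum, Finset.sum_congr rfl (fun j _ => hterm j), Finset.sum_add_distrib,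
    Finset.sum_add_distrib]
  have S1 : ∑ j : Fin N,
      (if (i : ℕ) = (j : ℕ) then (a (i.val + 1) - E) * Xext N x ((j : ℕ) + 1) else 0)
      = (a (i.val + 1) - E) * Xext N x (i.val + 1) := by
    have h : ∀ j : Fin N,
        (if (i : ℕ) = (j : ℕ) then (a (i.val + 1) - E) * Xext N x ((j : ℕ) + 1) else 0)
        = (if i = j then (a (i.val + 1) - E) * Xext N x ((j : ℕ) + 1) else 0) := by
      intro j
      by_cases h : i = j
      · rw [if_pos (by rw [h]), if_pos h]
      · rw [if_neg (fun hh => h (Fin.ext hh)), if_neg h]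
    rw [Finset.sum_congr rfl (fun j _ => h j), Finset.sum_ite_eq,
      if_pos (Finset.mem_univ i)]
  have S2 : ∑ j : Fin N,
      (if (i : ℕ) + 1 = (j : ℕ) then b (i.val + 1) * Xext N x ((j : ℕ) + 1) else 0)
      = b (i.val + 1) * Xext N x (i.val + 2) := by
    rw [Fin.sum_univ_eq_sum_range
      (fun m => if (i : ℕ) + 1 = m then b (i.val + 1) * Xext N x (m + 1) else 0) N,
      Finset.sum_ite_eq]
    by_cases h : i.val + 1 ∈ Finset.range N
    · rw [if_pos h]
    · rw [if_neg h]
      have hiN : i.val + 1 = N := by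
        have := i.isLt; simp [Finset.mem_range] at h; omega
      rw [hiN, hbN, zero_mul]
  have S3 : ∑ j : Fin N,
      (if (j : ℕ) + 1 = (i : ℕ) then c (i.val + 1) * Xext N x ((j : ℕ) + 1) else 0)
      = c (i.val + 1) * Xext N x i.val := by
    rw [Fin.sum_univ_eq_sum_range
      (fun m => if m + 1 = (i : ℕ) then c (i.val + 1) * Xext N x (m + 1) else 0) N,
      sum_shift]
    by_cases h : 1 ≤ i.val ∧ i.val ≤ N
    · rw [if_pos h]
      congr 2
      omega
    · rw [if_neg h]
      have h0 : i.val = 0 := by omega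
      rw [h0, Xext_zero, mul_zero]
  rw [S1, S2, S3]
  ring

private def wfun (cc ff : ℕ → ℂ) : ℕ → ℂ
  | 0 => ff 1
  | (m + 1) => -(cc (m + 2) * ff (m + 2)) * wfun cc ff m

/-- Green's-function identity: the (1,1) entry of the resolvent of a complex
tridiagonal matrix equals the continued fraction `f 1`
(1-based indexing of the entry data). -/
theorem stmt4 (N : ℕ) (hN : 0 < N) (a b c : ℕ → ℂ) (E : ℂ) (f : ℕ → ℂ)
    (hbN : b N = 0) (hcN : c (N + 1) = 0)
    (hfN : f (N + 1) = 0)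
    (hrec : ∀ k, 1 ≤ k → k ≤ N → f k * (a k - E - b k * f (k + 1) * c (k + 1)) = 1)
    (H : Matrix (Fin N) (Fin N) ℂ)
    (hH : ∀ i j : Fin N, H i j =
      if (i : ℕ) = (j : ℕ) then a ((i : ℕ) + 1)
      else if (i : ℕ) + 1 = (j : ℕ) then b ((i : ℕ) + 1)
      else if (j : ℕ) + 1 = (i : ℕ) then c ((i : ℕ) + 1) else 0) :
    IsUnit (H - E • (1 : Matrix (Fin N) (Fin N) ℂ)) ∧
      (H - E • (1 : Matrix (Fin N) (Fin N) ℂ))⁻¹ ⟨0, hN⟩ ⟨0, hN⟩ = f 1 := by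
  set M := H - E • (1 : Matrix (Fin N) (Fin N) ℂ) with hM
  -- rows in terms of the padded vector
  have row : ∀ (x : Fin N → ℂ) (k : ℕ) (h1 : 1 ≤ k) (h2 : k ≤ N),
      M.mulVec x ⟨k - 1, by omega⟩
        = c k * Xext N x (k - 1) + (a k - E) * Xext N x k + b k * Xext N x (k + 1) := by
    intro x k h1 h2
    have := key_row N a b c E hbN H hH x ⟨k - 1, by omega⟩
    simp only [hM] at this ⊢
    rw [this]
    have e1 : k - 1 + 1 = k := by omega
    have e2 : k - 1 + 2 = k + 1 := by omega
    rw [e1, e2]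
  -- kernel is trivial
  have kernel : ∀ x : Fin N → ℂ, M.mulVec x = 0 → x = 0 := by
    intro x hx
    have hrow : ∀ k, 1 ≤ k → k ≤ N →
        c k * Xext N x (k - 1) + (a k - E) * Xext N x k + b k * Xext N x (k + 1) = 0 := by
      intro k h1 h2
      rw [← row x k h1 h2, hx]
      rfl
    have Q : ∀ j k, 1 ≤ k → k ≤ N → N - k = j →
        Xext N x k = -(f k * c k) * Xext N x (k - 1) := by
      intro j
      induction j with
      | zero =>
        intro k h1 h2 h3
        have hk : N = k := by omega
        subst hk
        have hr := hrow N (by omega) le_rfl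
        have hd := hrec N (by omega) le_rfl
        rw [hbN] at hr hd
        rw [Xext_top] at hr
        linear_combination f N * hr - Xext N x N * hd
      | succ j ih =>
        intro k h1 h2 h3
        have hk : k < N := by omega
        have hq := ih (k + 1) (by omega) (by omega) (by omega)
        have e : k + 1 - 1 = k := by omega
        rw [e] at hq
        have hr := hrow k h1 (le_of_lt hk)
        have hd := hrec k h1 (le_of_lt hk)
        linear_combination f k * hr - Xext N x k * hd - f k * b k * hq
    have Z : ∀ k, k ≤ N → Xext N x k = 0 := by
      intro k
      induction k with
      | zero => intro _; exact Xext_zero N x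
      | succ k ih =>
        intro hk
        rw [Q (N - (k + 1)) (k + 1) (by omega) hk rfl]
        have e : k + 1 - 1 = k := by omega
        rw [e, ih (by omega), mul_zero]
    funext i
    have := Z (i.val + 1) (by omega)
    rw [Xext_fin] at this
    simpa using this
  have hdetne : M.det ≠ 0 := by
    intro h
    obtain ⟨v, hv0, hv⟩ := (Matrix.exists_mulVec_eq_zero_iff).mpr h
    exact hv0 (kernel v hv)
  have hUdet : IsUnit M.det := isUnit_iff_ne_zero.mpr hdetne
  have hU : IsUnit M := (Matrix.isUnit_iff_isUnit_det M).mpr hUdet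
  refine ⟨hU, ?_⟩
  -- the explicit solution of M v = e₁
  set v : Fin N → ℂ := fun i => wfun c f i.val with hvdef
  have Xv : ∀ m, 1 ≤ m → m ≤ N → Xext N v m = wfun c f (m - 1) := by
    intro m h1 h2
    rw [Xext, dif_pos ⟨h1, h2⟩]
  have hXrec : ∀ k, 2 ≤ k → k ≤ N →
      Xext N v k = -(c k * f k) * Xext N v (k - 1) := by
    intro k h1 h2
    rw [Xv k (by omega) h2, Xv (k - 1) (by omega) (by omega)]
    obtain ⟨m, rfl⟩ : ∃ m, k = m + 2 := ⟨k - 2, by omega⟩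
    have e1 : m + 2 - 1 = m + 1 := by omega
    have e2 : m + 1 - 1 = m := by omega
    rw [e1, e2]
    rfl
  have hbX : ∀ k, 1 ≤ k → k ≤ N →
      b k * Xext N v (k + 1) = b k * (-(c (k + 1) * f (k + 1)) * Xext N v k) := by
    intro k h1 h2
    by_cases hk : k < N
    · rw [hXrec (k + 1) (by omega) (by omega)]
      have e : k + 1 - 1 = k := by omega
      rw [e]
    · have : k = N := by omega
      subst this
      rw [hbN, zero_mul, zero_mul]
  have hx1 : Xext N v 1 = f 1 := by
    rw [Xv 1 le_rfl hN]
    rfl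
  have hmv : M.mulVec v = Pi.single (⟨0, hN⟩ : Fin N) 1 := by
    funext i
    have hk1 : 1 ≤ i.val + 1 := by omega
    have hk2 : i.val + 1 ≤ N := i.isLt
    have hi : i = ⟨i.val + 1 - 1, by omega⟩ := by
      apply Fin.ext; simp
    have hr : M.mulVec v i
        = c (i.val + 1) * Xext N v (i.val + 1 - 1) + (a (i.val + 1) - E) * Xext N v (i.val + 1)
          + b (i.val + 1) * Xext N v (i.val + 1 + 1) := by
      rw [hi]
      exact row v (i.val + 1) hk1 hk2
    have e : i.val + 1 - 1 = i.val := by omega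
    rw [e] at hr
    have hd := hrec (i.val + 1) hk1 hk2
    have hb := hbX (i.val + 1) hk1 hk2
    by_cases h0 : i.val = 0
    · have hps : (Pi.single (⟨0, hN⟩ : Fin N) 1 : Fin N → ℂ) i = 1 := by
        have : i = (⟨0, hN⟩ : Fin N) := Fin.ext (by simpa using h0)
        rw [this]
        simp
      rw [hps, hr, h0]
      rw [h0] at hd hb
      have hx0 : Xext N v 0 = 0 := Xext_zero N v
      have hx1' : Xext N v (0 + 1) = f (0 + 1) := by simpa using hx1
      linear_combination c (0 + 1) * hx0 + hb + hd
        + (a (0 + 1) - E - b (0 + 1) * f (0 + 1 + 1) * c (0 + 1 + 1)) * hx1'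
    · have hps : (Pi.single (⟨0, hN⟩ : Fin N) 1 : Fin N → ℂ) i = 0 := by
        have : i ≠ (⟨0, hN⟩ : Fin N) := by
          intro h; apply h0; rw [h]
        rw [Pi.single_apply, if_neg this]
      rw [hps, hr]
      have hXk := hXrec (i.val + 1) (by omega) hk2
      have e2 : i.val + 1 - 1 = i.val := by omega
      rw [e2] at hXk
      linear_combination hb
        + (a (i.val + 1) - E - b (i.val + 1) * f (i.val + 1 + 1) * c (i.val + 1 + 1)) * hXk
        - c (i.val + 1) * Xext N v i.val * hd
  -- conclude
  have hinv : M⁻¹.mulVec (Pi.single (⟨0, hN⟩ : Fin N) (1 : ℂ)) = v := by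
    rw [← hmv, Matrix.mulVec_mulVec, Matrix.nonsing_inv_mul M hUdet, Matrix.one_mulVec]
  have := congrFun hinv ⟨0, hN⟩
  have hl : M⁻¹.mulVec (Pi.single (⟨0, hN⟩ : Fin N) (1 : ℂ)) ⟨0, hN⟩ = M⁻¹ ⟨0, hN⟩ ⟨0, hN⟩ := by
    simp [Matrix.mulVec, dotProduct, Pi.single_apply]
  rw [hl] at this
  rw [this]
  rfl
end

section
/- Let α, β, γ, σ be real numbers, let A = [[0, β + iγ],[β − iγ, 0]] and B = [[0, α],[α, 0]] be 2×2 complex matrices, and let u, x, y be real numbers with D := u² − x² − y² ≠ 0. Let M = [[u, x + iy],[x − iy, u]]. Then M is invertible, and the matrix-continued-fraction step G := A − σ·I − B·M^{−1}·B equals [[u', x' + iy'],[x' − iy', u']] with real entries u' = −σ − α²·u/D, x' = β + α²·x/D, y' = γ − α²·y/D. In particular, the class of 2×2 Hermitian matrices with equal real diagonal entries is invariant under the matrix-continued-fraction recurrence F_k^{−1} = A − σ·I − B·F_{k+1}·B. -/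
set_option maxHeartbeats 1000000


/-- One step of the 2×2 matrix-continued-fraction recurrence:
for `A = [[0, β+iγ],[β-iγ, 0]]`, `B = [[0, α],[α, 0]]` and
`M = [[u, x+iy],[x-iy, u]]` with `D = u² - x² - y² ≠ 0`, the matrix `M` is
invertible and `A - σ·I - B·M⁻¹·B = [[u', x'+iy'],[x'-iy', u']]` with
`u' = -σ - α²u/D`, `x' = β + α²x/D`, `y' = γ - α²y/D`.  In particular the
class of 2×2 Hermitian matrices with equal real diagonal entries is invariant
under the recurrence. -/
theorem stmt12 (α β γ σ u x y : ℝ) (hD : u ^ 2 - x ^ 2 - y ^ 2 ≠ 0)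
    (A B M : Matrix (Fin 2) (Fin 2) ℂ)
    (hA : A = !![0, (β : ℂ) + Complex.I * (γ : ℂ); (β : ℂ) - Complex.I * (γ : ℂ), 0])
    (hB : B = !![0, (α : ℂ); (α : ℂ), 0])
    (hM : M = !![(u : ℂ), (x : ℂ) + Complex.I * (y : ℂ);
                 (x : ℂ) - Complex.I * (y : ℂ), (u : ℂ)])
    (u' x' y' : ℝ)
    (hu' : u' = -σ - α ^ 2 * u / (u ^ 2 - x ^ 2 - y ^ 2))
    (hx' : x' = β + α ^ 2 * x / (u ^ 2 - x ^ 2 - y ^ 2))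
    (hy' : y' = γ - α ^ 2 * y / (u ^ 2 - x ^ 2 - y ^ 2)) :
    IsUnit M ∧
      A - (σ : ℂ) • (1 : Matrix (Fin 2) (Fin 2) ℂ) - B * M⁻¹ * B =
        !![(u' : ℂ), (x' : ℂ) + Complex.I * (y' : ℂ);
           (x' : ℂ) - Complex.I * (y' : ℂ), (u' : ℂ)] := by
  have hDC : ((u : ℂ) ^ 2 - (x : ℂ) ^ 2 - (y : ℂ) ^ 2) ≠ 0 := by
    exact_mod_cast fun h => hD (by exact_mod_cast h)
  have hdet : M.det = (u : ℂ) ^ 2 - (x : ℂ) ^ 2 - (y : ℂ) ^ 2 := by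
    rw [hM, Matrix.det_fin_two_of]; ring_nf; rw [Complex.I_sq]; ring
  have hunit : IsUnit M := by
    rw [Matrix.isUnit_iff_isUnit_det, hdet]
    exact hDC.isUnit
  refine ⟨hunit, ?_⟩
  rw [Matrix.inv_def, hdet, hM, Matrix.adjugate_fin_two_of, hA, hB, hu', hx', hy']
  ext i j
  fin_cases i <;> fin_cases j <;>
    · simp only [Matrix.sub_apply, Matrix.smul_apply, Matrix.one_apply, Matrix.mul_apply,
        Fin.sum_univ_two, Matrix.cons_val', Matrix.cons_val_zero, Matrix.cons_val_one,
        Matrix.head_cons, Matrix.head_fin_const, Matrix.empty_val', Matrix.cons_val_fin_one,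
        Fin.isValue, if_true, if_false, Fin.zero_eta, Fin.mk_one, ne_eq, smul_eq_mul,
        Matrix.of_apply, Ring.inverse_eq_inv']
      push_cast
      field_simp
      ring
end

section
/- Let σ, β, γ be fixed real parameters and consider the real triplet map T(u, x, y) = (u', x', y') with u' = −σ − u/D, x' = β + x/D, y' = γ − y/D, where D = u² − x² − y² (this is the MCF iteration with α = 1). If (u, x, y) ∈ ℝ³ satisfies D ≠ 0 and γ·u = −σ·y, then the image also satisfies γ·u' = −σ·y'. In particular, since the initial point (u, x, y) = (−σ, β, γ) satisfies γ·u = −σ·y, this relation holds along all iterates of T (as long as they remain defined). -/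
/-- The relation `γ·u = -σ·y` is invariant under the MCF triplet map
`T(u,x,y) = (-σ - u/D, β + x/D, γ - y/D)`, `D = u² - x² - y²` (α = 1);
in particular it holds at the initial point `(u,x,y) = (-σ, β, γ)`. -/
theorem stmt13 (σ β γ u x y : ℝ) (hD : u ^ 2 - x ^ 2 - y ^ 2 ≠ 0)
    (h : γ * u = -(σ * y)) :
    γ * (-σ - u / (u ^ 2 - x ^ 2 - y ^ 2)) =
        -(σ * (γ - y / (u ^ 2 - x ^ 2 - y ^ 2))) ∧
      γ * (-σ) = -(σ * γ) := by
  constructor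
  · field_simp
    ring_nf
    linarith [h]
  · ring
end

section
/- Let σ, β, γ ∈ ℝ with σ ≠ 0, and let (u, x, y) ∈ ℝ³ with D := u² − x² − y² ≠ 0 be a fixed point of the MCF triplet map with α = 1, i.e., u = −σ − u/D, x = β + x/D, y = γ − y/D. Then u is a real root of the quartic polynomial P(u) = −4u⁴σ² + 4u⁴γ² − 8σ³u³ + 8σu³γ² + σ²u²β² − 5σ⁴u² + 5u²γ²σ² − 4σ²u² + σ³uβ² − 4uσ³ − σ⁵u + uγ²σ³ − σ⁴, i.e., P(u) = 0. -/
/-- Any real fixed point `(u,x,y)` of the MCF triplet map with `α = 1`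
(and `σ ≠ 0`) has its first component a root of the quartic polynomial `P`. -/
theorem stmt14 (σ β γ : ℝ) (hσ : σ ≠ 0) (u x y : ℝ)
    (hD : u ^ 2 - x ^ 2 - y ^ 2 ≠ 0)
    (hu : u = -σ - u / (u ^ 2 - x ^ 2 - y ^ 2))
    (hx : x = β + x / (u ^ 2 - x ^ 2 - y ^ 2))
    (hy : y = γ - y / (u ^ 2 - x ^ 2 - y ^ 2)) :
    -4 * u ^ 4 * σ ^ 2 + 4 * u ^ 4 * γ ^ 2 - 8 * σ ^ 3 * u ^ 3
        + 8 * σ * u ^ 3 * γ ^ 2 + σ ^ 2 * u ^ 2 * β ^ 2 - 5 * σ ^ 4 * u ^ 2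
        + 5 * u ^ 2 * γ ^ 2 * σ ^ 2 - 4 * σ ^ 2 * u ^ 2 + σ ^ 3 * u * β ^ 2
        - 4 * u * σ ^ 3 - σ ^ 5 * u + u * γ ^ 2 * σ ^ 3 - σ ^ 4 = 0 := by
  set D : ℝ := u ^ 2 - x ^ 2 - y ^ 2 with hDdef
  have hu' : u * D = -σ * D - u := by
    have h := hu
    field_simp at h
    linarith
  have hx' : x * D = β * D + x := by
    have h := hx
    field_simp at h
    linarith
  have hy' : y * D = γ * D - y := by
    have h := hy
    field_simp at h
    linarith
  have hE : D * (u + σ) = -u := by linear_combination hu'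
  have hu0 : u ≠ 0 := by
    intro h
    apply hD
    have : D * σ = 0 := by rw [h] at hE; linarith [hE]
    have := (mul_eq_zero.mp this).resolve_right hσ
    simpa [hDdef] using this
  have hy2 : y * σ = -(γ * u) := by
    have h0 : D * (γ * u + σ * y) = 0 := by linear_combination y * hu' - u * hy'
    have := (mul_eq_zero.mp h0).resolve_left hD
    linarith
  have hx2 : x * (2 * u + σ) = β * u := by
    linear_combination (-(u + σ)) * hx' + (x - β) * hE
  have hx3 : x ^ 2 * (2 * u + σ) ^ 2 = β ^ 2 * u ^ 2 := by
    linear_combination (x * (2 * u + σ) + β * u) * hx2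
  have hy3 : y ^ 2 * σ ^ 2 = γ ^ 2 * u ^ 2 := by
    linear_combination (y * σ - γ * u) * hy2
  have key : u * (-4 * u ^ 4 * σ ^ 2 + 4 * u ^ 4 * γ ^ 2 - 8 * σ ^ 3 * u ^ 3
        + 8 * σ * u ^ 3 * γ ^ 2 + σ ^ 2 * u ^ 2 * β ^ 2 - 5 * σ ^ 4 * u ^ 2
        + 5 * u ^ 2 * γ ^ 2 * σ ^ 2 - 4 * σ ^ 2 * u ^ 2 + σ ^ 3 * u * β ^ 2
        - 4 * u * σ ^ 3 - σ ^ 5 * u + u * γ ^ 2 * σ ^ 3 - σ ^ 4) = 0 := by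
    linear_combination (-(σ ^ 2) * (2 * u + σ) ^ 2) * hE
      + (-(σ ^ 2) * (u + σ)) * hx3 + (-((u + σ) * (2 * u + σ) ^ 2)) * hy3
  exact (mul_eq_zero.mp key).resolve_left hu0
end

section
/- Let σ, β, γ ∈ ℝ with σ ≠ 0, and let (u, x, y) ∈ ℝ³ with D := u² − x² − y² ≠ 0 be a fixed point of the MCF triplet map with α = 1, i.e., u = −σ − u/D, x = β + x/D, y = γ − y/D. Then u and x satisfy the relation βσ³x − 4u³σ² + 4u³γ² − 6σ³u² + 6u²γ²σ − 4uσ² + σ²uβ² − 2uσ⁴ + 2uσ²γ² − 2σ³ = 0, which is linear in x and hence (when β ≠ 0) determines x uniquely from u. -/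
/-- At any real fixed point `(u,x,y)` of the MCF triplet map with `α = 1`
(and `σ ≠ 0`), the components `u` and `x` satisfy a relation that is linear
in `x` (and hence, when `β ≠ 0`, determines `x` uniquely from `u`). -/
theorem stmt15 (σ β γ : ℝ) (hσ : σ ≠ 0) (u x y : ℝ)
    (hD : u ^ 2 - x ^ 2 - y ^ 2 ≠ 0)
    (hu : u = -σ - u / (u ^ 2 - x ^ 2 - y ^ 2))
    (hx : x = β + x / (u ^ 2 - x ^ 2 - y ^ 2))
    (hy : y = γ - y / (u ^ 2 - x ^ 2 - y ^ 2)) :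
    β * σ ^ 3 * x - 4 * u ^ 3 * σ ^ 2 + 4 * u ^ 3 * γ ^ 2 - 6 * σ ^ 3 * u ^ 2
        + 6 * u ^ 2 * γ ^ 2 * σ - 4 * u * σ ^ 2 + σ ^ 2 * u * β ^ 2
        - 2 * u * σ ^ 4 + 2 * u * σ ^ 2 * γ ^ 2 - 2 * σ ^ 3 = 0 := by
  have h1 : (u + σ) * (u ^ 2 - x ^ 2 - y ^ 2) = -u := by
    have h := hu
    field_simp at h
    linear_combination h
  have h2 : (x - β) * (u ^ 2 - x ^ 2 - y ^ 2) = x := by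
    have h := hx
    field_simp at h
    linear_combination h
  have h3 : (y - γ) * (u ^ 2 - x ^ 2 - y ^ 2) = -y := by
    have h := hy
    field_simp at h
    linear_combination h
  have hA : (2 * u + σ) * x = β * u := by
    linear_combination (x - β) * h1 - (u + σ) * h2
  have hB : σ * y + γ * u = 0 := by
    linear_combination (γ - y) * h1 + (u + σ) * h3
  have hu0 : u ≠ 0 := by
    intro h0
    rw [h0] at h1 hD
    have hσD : σ * ((0 : ℝ) ^ 2 - x ^ 2 - y ^ 2) = 0 := by linear_combination h1
    rcases mul_eq_zero.mp hσD with h | h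
    · exact hσ h
    · exact hD h
  by_cases ht : 2 * u + σ = 0
  · have hσ' : σ = -2 * u := by linarith
    have hD1 : u ^ 2 - x ^ 2 - y ^ 2 = 1 := by
      have huD : u * (u ^ 2 - x ^ 2 - y ^ 2) = u * 1 := by
        rw [hσ'] at h1; linear_combination -h1
      exact mul_left_cancel₀ hu0 huD
    have hβ : β = 0 := by rw [hD1] at h2; linarith
    rw [hσ', hβ]; ring
  · have key : u * (2 * u + σ) *
        (β * σ ^ 3 * x - 4 * u ^ 3 * σ ^ 2 + 4 * u ^ 3 * γ ^ 2 - 6 * σ ^ 3 * u ^ 2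
        + 6 * u ^ 2 * γ ^ 2 * σ - 4 * u * σ ^ 2 + σ ^ 2 * u * β ^ 2
        - 2 * u * σ ^ 4 + 2 * u * σ ^ 2 * γ ^ 2 - 2 * σ ^ 3) = 0 := by
      linear_combination (-2 * σ ^ 2 * (2 * u + σ) ^ 2) * h1
        + (-(2 * (u + σ) * σ ^ 2 * ((2 * u + σ) * x + β * u)) + u * σ ^ 3 * β) * hA
        + (-2 * (u + σ) * (2 * u + σ) ^ 2 * (σ * y - γ * u)) * hB
    have hne : u * (2 * u + σ) ≠ 0 := mul_ne_zero hu0 ht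
    exact mul_left_cancel₀ hne (by rw [mul_zero]; linear_combination key)
end

section
/- For the parameter choice σ = 1, γ = 1/2, β = 2 and α = 1, the MCF triplet map T(u, x, y) = (−σ − u/D, β + x/D, γ − y/D), with D = u² − x² − y², has no real fixed point: there is no (u, x, y) ∈ ℝ³ with D ≠ 0 satisfying u = −1 − u/D, x = 2 + x/D, y = 1/2 − y/D. -/
/-- For `σ = 1`, `γ = 1/2`, `β = 2` (and `α = 1`) the MCF triplet map
`T(u,x,y) = (-σ - u/D, β + x/D, γ - y/D)`, `D = u² - x² - y²`, has no real
fixed point. -/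
theorem stmt18 :
    ¬ ∃ u x y : ℝ, u ^ 2 - x ^ 2 - y ^ 2 ≠ 0 ∧
      u = -1 - u / (u ^ 2 - x ^ 2 - y ^ 2) ∧
      x = 2 + x / (u ^ 2 - x ^ 2 - y ^ 2) ∧
      y = 1 / 2 - y / (u ^ 2 - x ^ 2 - y ^ 2) := by
  rintro ⟨u, x, y, hd, hu, hx, hy⟩
  set d : ℝ := u ^ 2 - x ^ 2 - y ^ 2 with hdef
  have hdeq : d = u ^ 2 - x ^ 2 - y ^ 2 := hdef
  have h1 : u * (d + 1) = -d := by
    field_simp at hu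
    linarith
  have h2 : x * (d - 1) = 2 * d := by
    field_simp at hx
    linarith
  have h3 : 2 * y * (d + 1) = d := by
    field_simp at hy
    linarith
  have hu2 : (u * (d + 1)) ^ 2 = d ^ 2 := by rw [h1]; ring
  have hx2 : (x * (d - 1)) ^ 2 = 4 * d ^ 2 := by rw [h2]; ring
  have hy2 : (2 * y * (d + 1)) ^ 2 = d ^ 2 := by rw [h3]
  have key : d * (4 * d ^ 4 + 13 * d ^ 3 + 30 * d ^ 2 + 13 * d + 4) = 0 := by
    linear_combination 4 * (d + 1) ^ 2 * (d - 1) ^ 2 * hdeq + 4 * (d - 1) ^ 2 * hu2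
      - 4 * (d + 1) ^ 2 * hx2 - (d - 1) ^ 2 * hy2
  have hq : 4 * d ^ 4 + 13 * d ^ 3 + 30 * d ^ 2 + 13 * d + 4 = 0 := by
    rcases mul_eq_zero.mp key with h | h
    · exact absurd h hd
    · exact h
  nlinarith [sq_nonneg (2 * d ^ 2 + 13 / 4 * d), sq_nonneg (311 * d + 104)]
end
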